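/- Let M ⊆ ℝ^n × ℝ^n be a maximally monotone structure. Then there exist a k ≥ 0, a Dirac structure D ⊆ ℝ^n × ℝ^n × ℝ^k × ℝ^k and a nonnegative Lagrange structure R ⊆ ℝ^k × ℝ^k such that M equals the composition D ∘ R = {(f,e) : ∃ (f_R,e_R), (f,e,−f_R,e_R) ∈ D and (f_R,e_R) ∈ R}. -/

import Mathlib

open Matrix Module


lemma dot_eq_inner_aux (n : ℕ) :
    ∃ ι : (Fin n → ℝ) ≃ₗ[ℝ] EuclideanSpace ℝ (Fin n),
      ∀ x y : Fin n → ℝ, (inner ℝ (ι x) (ι y) : ℝ) = x ⬝ᵥ y := by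
  refine ⟨(WithLp.linearEquiv 2 ℝ (Fin n → ℝ)).symm, fun x y => ?_⟩
  simp [PiLp.inner_apply, RCLike.inner_apply, dotProduct, WithLp.linearEquiv, mul_comm]

/-- orthogonal projection onto V, expressed on plain `Fin n → ℝ` with dot products -/
lemma proj_aux (n : ℕ) (V : Submodule ℝ (Fin n → ℝ)) :
    ∃ (P : (Fin n → ℝ) →ₗ[ℝ] (Fin n → ℝ)) (W : Submodule ℝ (Fin n → ℝ)),
      (∀ x, P x = x ↔ x ∈ V) ∧
      (∀ x, P x = 0 ↔ x ∈ W) ∧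
      (∀ x, x ∈ W ↔ ∀ v ∈ V, x ⬝ᵥ v = 0) ∧
      (∀ x y, P x ⬝ᵥ y = x ⬝ᵥ P y) ∧
      (∀ x, P x ∈ V) ∧
      (finrank ℝ V + finrank ℝ W = n) := by
  obtain ⟨ι, hι⟩ := dot_eq_inner_aux n
  set V' : Submodule ℝ (EuclideanSpace ℝ (Fin n)) := V.map ι.toLinearMap with hV'
  set W : Submodule ℝ (Fin n → ℝ) := V'ᗮ.map ι.symm.toLinearMap with hW
  set P : (Fin n → ℝ) →ₗ[ℝ] (Fin n → ℝ) :=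
    ι.symm.toLinearMap ∘ₗ V'.subtype ∘ₗ (Submodule.orthogonalProjectionOnto V').toLinearMap ∘ₗ ι.toLinearMap
    with hP
  have hPapply : ∀ x, P x = ι.symm ((Submodule.orthogonalProjectionOnto V') (ι x) : EuclideanSpace ℝ (Fin n)) :=
    fun x => rfl
  have hmemV : ∀ x : Fin n → ℝ, x ∈ V ↔ ι x ∈ V' := by
    intro x
    rw [hV']
    constructor
    · intro h; exact Submodule.mem_map_of_mem h
    · intro h
      rcases h with ⟨y, hy, hyx⟩
      have : y = x := by
        have := congrArg ι.symm hyx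
        simpa using this
      rwa [this] at hy
  have hmemW : ∀ x : Fin n → ℝ, x ∈ W ↔ ι x ∈ V'ᗮ := by
    intro x
    rw [hW]
    constructor
    · rintro ⟨y, hy, hyx⟩
      have : y = ι x := by
        have := congrArg ι hyx; simpa using this
      rwa [this] at hy
    · intro h; exact ⟨ι x, h, by simp⟩
  refine ⟨P, W, ?_, ?_, ?_, ?_, ?_, ?_⟩
  · intro x
    rw [hPapply, hmemV]
    constructor
    · intro h
      have : ((Submodule.orthogonalProjectionOnto V') (ι x) : EuclideanSpace ℝ (Fin n)) = ι x := by
        have := congrArg ι h; simpa using this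
      exact Submodule.starProjection_eq_self_iff.mp this
    · intro h
      have : ((Submodule.orthogonalProjectionOnto V') (ι x) : EuclideanSpace ℝ (Fin n)) = ι x := Submodule.starProjection_eq_self_iff.mpr h
      rw [this]; simp
  · intro x
    rw [hPapply, hmemW]
    constructor
    · intro h
      have h0 : ((Submodule.orthogonalProjectionOnto V') (ι x) : EuclideanSpace ℝ (Fin n)) = 0 := by
        have := congrArg ι h; simpa using this
      have : ι x - ((Submodule.orthogonalProjectionOnto V') (ι x) : EuclideanSpace ℝ (Fin n)) ∈ V'ᗮ := Submodule.sub_starProjection_mem_orthogonal (K := V') (ι x)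
      rwa [h0, sub_zero] at this
    · intro h
      rw [Submodule.orthogonalProjectionOnto_apply_of_mem_orthogonal h]
      simp
  · intro x
    rw [hmemW, Submodule.mem_orthogonal]
    constructor
    · intro h v hv
      have := h (ι v) ((hmemV v).mp hv)
      rw [hι] at this
      rwa [dotProduct_comm] at this
    · intro h u hu
      rcases (Submodule.mem_map).mp hu with ⟨v, hv, rfl⟩
      rw [LinearEquiv.coe_coe, hι, dotProduct_comm]; exact h v hv
  · intro x y
    rw [hPapply, hPapply, ← hι, ← hι]
    simp only [LinearEquiv.apply_symm_apply]
    exact Submodule.inner_starProjection_left_eq_right V' (ι x) (ι y)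
  · intro x
    rw [hPapply, hmemV]
    simp only [LinearEquiv.apply_symm_apply]
    exact Submodule.coe_mem _
  · have h1 : finrank ℝ V = finrank ℝ V' := (ι.finrank_map_eq V).symm
    have h2 : finrank ℝ W = finrank ℝ V'ᗮ := ι.symm.finrank_map_eq V'ᗮ
    have h3 := Submodule.finrank_add_finrank_orthogonal V'
    rw [h1, h2, h3]
    simp


lemma adjoint_aux (n : ℕ) (A : (Fin n → ℝ) →ₗ[ℝ] (Fin n → ℝ)) :
    ∃ At : (Fin n → ℝ) →ₗ[ℝ] (Fin n → ℝ), ∀ x y, At x ⬝ᵥ y = x ⬝ᵥ A y := by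
  refine ⟨Matrix.toLin' (LinearMap.toMatrix' A)ᵀ, fun x y => ?_⟩
  rw [Matrix.toLin'_apply, Matrix.mulVec_transpose]
  conv_rhs => rw [← Matrix.toLin'_toMatrix' A]
  rw [Matrix.toLin'_apply, Matrix.dotProduct_mulVec]

set_option maxHeartbeats 1000000 in
set_option synthInstance.maxHeartbeats 500000 in
lemma repr_aux (n : ℕ) (M : Submodule ℝ ((Fin n → ℝ) × (Fin n → ℝ)))
    (hM : ∀ p ∈ M, (0:ℝ) ≤ p.2 ⬝ᵥ p.1) (hdim : finrank ℝ M = n) :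
    ∃ (P A : (Fin n → ℝ) →ₗ[ℝ] (Fin n → ℝ)) (V W : Submodule ℝ (Fin n → ℝ)),
      (∀ x, P x = x ↔ x ∈ V) ∧
      (∀ x, P x = 0 ↔ x ∈ W) ∧
      (∀ x y, P x ⬝ᵥ y = x ⬝ᵥ P y) ∧
      (finrank ℝ V + finrank ℝ W = n) ∧
      (∀ x, 0 ≤ A x ⬝ᵥ x) ∧
      (∀ x, P (A x) = A x) ∧
      (∀ x, A (P x) = A x) ∧
      (∀ f e, (f, e) ∈ M ↔ (P f = f ∧ P e = A f)) := by
  classical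
  let φ : ↥M →ₗ[ℝ] (Fin n → ℝ) := (LinearMap.fst ℝ (Fin n → ℝ) (Fin n → ℝ)).comp M.subtype
  set V : Submodule ℝ (Fin n → ℝ) := LinearMap.range φ with hV
  obtain ⟨P, W, hPV, hPzero, hWmem, hPsym, hPmem, hVdim⟩ := proj_aux n V
  -- section of the projection M → V
  obtain ⟨σ, hσ⟩ := LinearMap.exists_rightInverse_of_surjective
    (φ.rangeRestrict) (LinearMap.range_rangeRestrict φ)
  have hσ' : ∀ v : ↥V, ((σ v : (Fin n → ℝ) × (Fin n → ℝ))).1 = ↑v := by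
    intro v
    have h1 := DFunLike.congr_fun hσ v
    exact congrArg Subtype.val h1
  -- M0 = {e | (0,e) ∈ M}
  set M0 : Submodule ℝ (Fin n → ℝ) := M.comap (LinearMap.inr ℝ (Fin n → ℝ) (Fin n → ℝ)) with hM0
  have hM0mem : ∀ e, e ∈ M0 ↔ ((0 : (Fin n → ℝ)), e) ∈ M := fun e => Iff.rfl
  -- ker φ ≃ M0
  have e_ker : ↥(LinearMap.ker φ) ≃ₗ[ℝ] ↥M0 := by
    refine
      { toFun := fun x => ⟨((x : ↥M) : (Fin n → ℝ) × (Fin n → ℝ)).2, ?_⟩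
        map_add' := fun x y => rfl
        map_smul' := fun c x => rfl
        invFun := fun e => ⟨⟨((0 : (Fin n → ℝ)), (e : (Fin n → ℝ))), e.2⟩, ?_⟩
        left_inv := ?_
        right_inv := fun e => rfl }
    · have h0 : ((x : ↥M) : (Fin n → ℝ) × (Fin n → ℝ)).1 = 0 := x.2
      rw [hM0mem, ← h0, Prod.mk.eta]
      exact ((x : ↥M)).2
    · rfl
    · intro x
      apply Subtype.ext; apply Subtype.ext
      have h0 : ((x : ↥M) : (Fin n → ℝ) × (Fin n → ℝ)).1 = 0 := x.2
      exact Prod.ext h0.symm rfl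
  -- dimension count
  have hdims : finrank ℝ V + finrank ℝ M0 = n := by
    have h1 := LinearMap.finrank_range_add_finrank_ker φ
    have h2 : finrank ℝ ↥(LinearMap.ker φ) = finrank ℝ ↥M0 := e_ker.finrank_eq
    rw [h2, hdim] at h1
    exact h1
  -- M0 ≤ W by monotonicity, then equality by dimension
  have hM0W : M0 = W := by
    have hle : M0 ≤ W := by
      intro h hh
      rw [hWmem]
      intro v hv
      obtain ⟨mm, hmm⟩ := hv
      set e := ((mm : (Fin n → ℝ) × (Fin n → ℝ))).2 with he
      have hve : ∀ t : ℝ, ((v, e + t • h) : (Fin n → ℝ) × (Fin n → ℝ)) ∈ M := by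
        intro t
        have h1 : ((v, e) : (Fin n → ℝ) × (Fin n → ℝ)) ∈ M := by
          have h2 := mm.2
          have h3 : ((mm : (Fin n → ℝ) × (Fin n → ℝ))) = (v, e) := Prod.ext hmm rfl
          rwa [h3] at h2
        have h4 : (((0 : Fin n → ℝ), h) : (Fin n → ℝ) × (Fin n → ℝ)) ∈ M := (hM0mem h).1 hh
        have h5 := M.add_mem h1 (M.smul_mem t h4)
        simpa using h5
      have hb : ∀ t : ℝ, 0 ≤ e ⬝ᵥ v + t * (h ⬝ᵥ v) := by
        intro t
        have h6 := hM _ (hve t)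
        simpa [add_dotProduct, smul_dotProduct, smul_eq_mul] using h6
      by_contra hc
      have := hb (-(e ⬝ᵥ v + 1) / (h ⬝ᵥ v))
      rw [div_mul_cancel₀ _ hc] at this
      linarith
    exact Submodule.eq_of_le_of_finrank_eq hle (Nat.add_left_cancel (hdims.trans hVdim.symm))
  -- the map A
  set Pc : (Fin n → ℝ) →ₗ[ℝ] ↥V := LinearMap.codRestrict V P hPmem with hPcdef
  set A : (Fin n → ℝ) →ₗ[ℝ] (Fin n → ℝ) :=
    P ∘ₗ ((LinearMap.snd ℝ (Fin n → ℝ) (Fin n → ℝ)) ∘ₗ M.subtype) ∘ₗ σ ∘ₗ Pc with hAdef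
  have hAx : ∀ x, A x = P ((σ (Pc x) : (Fin n → ℝ) × (Fin n → ℝ)).2) := fun x => rfl
  have hm1 : ∀ x, ((σ (Pc x) : (Fin n → ℝ) × (Fin n → ℝ))).1 = P x := fun x => hσ' (Pc x)
  have hPP : ∀ x, P (P x) = P x := fun x => (hPV (P x)).2 (hPmem x)
  have hPA : ∀ x, P (A x) = A x := by
    intro x; rw [hAx, hPP]
  have hAP : ∀ x, A (P x) = A x := by
    intro x
    have hc : Pc (P x) = Pc x := Subtype.ext (hPP x)
    rw [hAx, hAx, hc]
  have hAmono : ∀ x, 0 ≤ A x ⬝ᵥ x := by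
    intro x
    have h1 := hM _ (σ (Pc x)).2
    calc (0:ℝ) ≤ (σ (Pc x) : (Fin n → ℝ) × (Fin n → ℝ)).2 ⬝ᵥ (σ (Pc x) : (Fin n → ℝ) × (Fin n → ℝ)).1 := h1
    _ = (σ (Pc x) : (Fin n → ℝ) × (Fin n → ℝ)).2 ⬝ᵥ P x := by rw [hm1]
    _ = P ((σ (Pc x) : (Fin n → ℝ) × (Fin n → ℝ)).2) ⬝ᵥ x := (hPsym _ _).symm
    _ = A x ⬝ᵥ x := by rw [← hAx]
  have hMchar : ∀ f e, (f, e) ∈ M ↔ (P f = f ∧ P e = A f) := by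
    intro f e
    constructor
    · intro hfe
      have hf : f ∈ V := ⟨⟨(f, e), hfe⟩, rfl⟩
      have hPf : P f = f := (hPV f).2 hf
      have hPcf : Pc f = ⟨f, hf⟩ := Subtype.ext hPf
      set m := σ (⟨f, hf⟩ : ↥V) with hmdef
      have hm1f : ((m : (Fin n → ℝ) × (Fin n → ℝ))).1 = f := hσ' _
      have hsub : ((f, e) - (↑m : (Fin n → ℝ) × (Fin n → ℝ))) ∈ M := M.sub_mem hfe m.2
      have heq : ((f, e) - (↑m : (Fin n → ℝ) × (Fin n → ℝ)))
          = (((0:(Fin n → ℝ)), e - (↑m : (Fin n → ℝ) × (Fin n → ℝ)).2) : (Fin n → ℝ) × (Fin n → ℝ)) := by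
        apply Prod.ext
        · show f - (↑m : (Fin n → ℝ) × (Fin n → ℝ)).1 = 0
          rw [hm1f, sub_self]
        · rfl
      rw [heq] at hsub
      have hWm : e - (↑m : (Fin n → ℝ) × (Fin n → ℝ)).2 ∈ W := by
        rw [← hM0W]; exact (hM0mem _).2 hsub
      have hP0 : P (e - (↑m : (Fin n → ℝ) × (Fin n → ℝ)).2) = 0 := (hPzero _).2 hWm
      rw [map_sub, sub_eq_zero] at hP0
      refine ⟨hPf, ?_⟩
      rw [hAx, hPcf, ← hmdef]
      exact hP0
    · rintro ⟨hPf, hPe⟩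
      have hf : f ∈ V := (hPV f).1 hPf
      have hPcf : Pc f = ⟨f, hf⟩ := Subtype.ext hPf
      set m := σ (⟨f, hf⟩ : ↥V) with hmdef
      have hm1f : ((m : (Fin n → ℝ) × (Fin n → ℝ))).1 = f := hσ' _
      have hAf : A f = P ((↑m : (Fin n → ℝ) × (Fin n → ℝ)).2) := by
        rw [hAx, hPcf, ← hmdef]
      have hP0 : P (e - (↑m : (Fin n → ℝ) × (Fin n → ℝ)).2) = 0 := by
        rw [map_sub, hPe, hAf, sub_self]
      have hsub : (((0:(Fin n → ℝ)), e - (↑m : (Fin n → ℝ) × (Fin n → ℝ)).2) : (Fin n → ℝ) × (Fin n → ℝ)) ∈ M := by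
        have := (hPzero _).1 hP0
        rw [← hM0W] at this
        exact (hM0mem _).1 this
      have heq : ((f, e) : (Fin n → ℝ) × (Fin n → ℝ))
          = (↑m : (Fin n → ℝ) × (Fin n → ℝ)) + ((0:(Fin n → ℝ)), e - (↑m : (Fin n → ℝ) × (Fin n → ℝ)).2) := by
        apply Prod.ext
        · show f = (↑m : (Fin n → ℝ) × (Fin n → ℝ)).1 + 0
          rw [hm1f, add_zero]
        · show e = (↑m : (Fin n → ℝ) × (Fin n → ℝ)).2 + (e - (↑m : (Fin n → ℝ) × (Fin n → ℝ)).2)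
          rw [add_sub_cancel]
      rw [heq]
      exact M.add_mem m.2 hsub
  exact ⟨P, A, V, W, hPV, hPzero, hPsym, hVdim, hAmono, hPA, hAP, hMchar⟩

set_option maxHeartbeats 1000000 in
theorem mms_eq_dirac_comp_resistive
    (n : ℕ) (M : Submodule ℝ ((Fin n → ℝ) × (Fin n → ℝ)))
    (hM : ∀ p ∈ M, (0 : ℝ) ≤ p.2 ⬝ᵥ p.1)
    (hdim : Module.finrank ℝ M = n) :
    ∃ (k : ℕ)
      (D : Submodule ℝ ((Fin n → ℝ) × (Fin n → ℝ) × (Fin k → ℝ) × (Fin k → ℝ)))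
      (R : Submodule ℝ ((Fin k → ℝ) × (Fin k → ℝ))),
      (∀ p ∈ D, p.2.1 ⬝ᵥ p.1 + p.2.2.2 ⬝ᵥ p.2.2.1 = 0) ∧
      Module.finrank ℝ D = n + k ∧
      (∀ p ∈ R, ∀ q ∈ R, p.2 ⬝ᵥ q.1 - q.2 ⬝ᵥ p.1 = 0) ∧
      (∀ p ∈ R, (0 : ℝ) ≤ p.2 ⬝ᵥ p.1) ∧
      Module.finrank ℝ R = k ∧
      (M : Set ((Fin n → ℝ) × (Fin n → ℝ)))
        = {p | ∃ fR eR : Fin k → ℝ, (p.1, p.2, -fR, eR) ∈ D ∧ (fR, eR) ∈ R} := by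
  classical
  obtain ⟨P, A, V, W, hPV, hPzero, hPsym, hVdim, hAmono, hPA, hAP, hMchar⟩ :=
    repr_aux n M hM hdim
  obtain ⟨At, hAt⟩ := adjoint_aux n A
  -- nondegeneracy of the dot product
  have hnd : ∀ a b : Fin n → ℝ, (∀ y, a ⬝ᵥ y = b ⬝ᵥ y) → a = b := by
    intro a b hab
    have h1 : (a - b) ⬝ᵥ (a - b) = 0 := by
      rw [sub_dotProduct, hab (a - b), sub_self]
    have h2 := dotProduct_self_eq_zero.mp h1
    exact sub_eq_zero.mp h2
  -- symmetric and skew parts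
  set S : (Fin n → ℝ) →ₗ[ℝ] (Fin n → ℝ) := (1/2 : ℝ) • (A + At) with hSdef
  set J : (Fin n → ℝ) →ₗ[ℝ] (Fin n → ℝ) := A - S with hJdef
  have hSx : ∀ x, S x = (1/2 : ℝ) • (A x + At x) := fun x => rfl
  have hJx : ∀ x, J x = A x - S x := fun x => rfl
  have hAtd : ∀ x y, x ⬝ᵥ At y = A x ⬝ᵥ y := by
    intro x y
    rw [dotProduct_comm, hAt, dotProduct_comm]
  have hSsym : ∀ x y, S x ⬝ᵥ y = x ⬝ᵥ S y := by
    intro x y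
    rw [hSx, hSx, smul_dotProduct, dotProduct_smul,
      add_dotProduct, dotProduct_add, hAt, hAtd]
    simp [smul_eq_mul]; ring
  have hSA : ∀ x, S x ⬝ᵥ x = A x ⬝ᵥ x := by
    intro x
    rw [hSx, smul_dotProduct, add_dotProduct, hAt,
      dotProduct_comm x (A x)]
    simp [smul_eq_mul]; ring
  have hSpos : ∀ x, 0 ≤ S x ⬝ᵥ x := fun x => (hSA x) ▸ hAmono x
  have hPAt : ∀ x, P (At x) = At x := by
    intro x
    refine hnd _ _ fun y => ?_
    rw [hPsym, hAt, hAt, hAP]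
  have hAtP : ∀ x, At (P x) = At x := by
    intro x
    refine hnd _ _ fun y => ?_
    rw [hAt, hAt, hPsym, hPA]
  have hPS : ∀ x, P (S x) = S x := by
    intro x
    rw [hSx, _root_.map_smul, map_add, hPA, hPAt]
  have hSP : ∀ x, S (P x) = S x := by
    intro x
    rw [hSx, hSx, hAP, hAtP]
  have hPJ : ∀ x, P (J x) = J x := by
    intro x
    rw [hJx, map_sub, hPA, hPS]
  have hJskew : ∀ x, J x ⬝ᵥ x = 0 := by
    intro x
    rw [hJx, sub_dotProduct, hSA, sub_self]
  -- the Dirac structure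
  set D : Submodule ℝ ((Fin n → ℝ) × (Fin n → ℝ) × (Fin n → ℝ) × (Fin n → ℝ)) :=
    { carrier := {q | P q.1 = q.1 ∧ P q.2.2.1 = - q.1 ∧ P q.2.1 = J q.1 + q.2.2.2 ∧
        P q.2.2.2 = q.2.2.2}
      add_mem' := by
        rintro q r ⟨h1, h2, h3, h4⟩ ⟨g1, g2, g3, g4⟩
        refine ⟨?_, ?_, ?_, ?_⟩ <;>
          simp only [Prod.fst_add, Prod.snd_add, map_add, h1, h2, h3, h4, g1, g2, g3, g4] <;>
          abel
      zero_mem' := by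
        refine ⟨?_, ?_, ?_, ?_⟩ <;> simp
      smul_mem' := by
        rintro c q ⟨h1, h2, h3, h4⟩
        refine ⟨?_, ?_, ?_, ?_⟩ <;>
          simp only [Prod.smul_fst, Prod.smul_snd, _root_.map_smul, h1, h2, h3, h4, smul_add,
            smul_neg] } with hDdef
  have hDmem : ∀ q : (Fin n → ℝ) × (Fin n → ℝ) × (Fin n → ℝ) × (Fin n → ℝ),
      q ∈ D ↔ (P q.1 = q.1 ∧ P q.2.2.1 = - q.1 ∧ P q.2.1 = J q.1 + q.2.2.2 ∧
        P q.2.2.2 = q.2.2.2) := fun q => Iff.rfl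
  -- the resistive structure
  set R : Submodule ℝ ((Fin n → ℝ) × (Fin n → ℝ)) := LinearMap.graph S with hRdef
  have hRmem : ∀ p : (Fin n → ℝ) × (Fin n → ℝ), p ∈ R ↔ p.2 = S p.1 := by
    intro p; rw [hRdef]; exact LinearMap.mem_graph_iff _ _
  refine ⟨n, D, R, ?_, ?_, ?_, ?_, ?_, ?_⟩
  · -- neutrality
    intro p hp
    obtain ⟨h1, h2, h3, h4⟩ := (hDmem p).1 hp
    have e1 : p.2.1 ⬝ᵥ p.1 = p.2.2.2 ⬝ᵥ p.1 := by
      calc p.2.1 ⬝ᵥ p.1 = p.2.1 ⬝ᵥ P p.1 := by rw [h1]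
      _ = P p.2.1 ⬝ᵥ p.1 := (hPsym _ _).symm
      _ = (J p.1 + p.2.2.2) ⬝ᵥ p.1 := by rw [h3]
      _ = J p.1 ⬝ᵥ p.1 + p.2.2.2 ⬝ᵥ p.1 := add_dotProduct _ _ _
      _ = p.2.2.2 ⬝ᵥ p.1 := by rw [hJskew, zero_add]
    have e2 : p.2.2.2 ⬝ᵥ p.2.2.1 = - (p.2.2.2 ⬝ᵥ p.1) := by
      calc p.2.2.2 ⬝ᵥ p.2.2.1 = P p.2.2.2 ⬝ᵥ p.2.2.1 := by rw [h4]
      _ = p.2.2.2 ⬝ᵥ P p.2.2.1 := hPsym _ _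
      _ = p.2.2.2 ⬝ᵥ (- p.1) := by rw [h2]
      _ = - (p.2.2.2 ⬝ᵥ p.1) := by rw [dotProduct_neg]
    rw [e1, e2, add_neg_cancel]
  · -- dimension of D
    let q1 : ((↥V × ↥V) × (↥W × ↥W)) →ₗ[ℝ] (Fin n → ℝ) :=
      V.subtype ∘ₗ (LinearMap.fst ℝ ↥V ↥V) ∘ₗ (LinearMap.fst ℝ (↥V × ↥V) (↥W × ↥W))
    let q2 : ((↥V × ↥V) × (↥W × ↥W)) →ₗ[ℝ] (Fin n → ℝ) :=
      V.subtype ∘ₗ (LinearMap.snd ℝ ↥V ↥V) ∘ₗ (LinearMap.fst ℝ (↥V × ↥V) (↥W × ↥W))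
    let q3 : ((↥V × ↥V) × (↥W × ↥W)) →ₗ[ℝ] (Fin n → ℝ) :=
      W.subtype ∘ₗ (LinearMap.fst ℝ ↥W ↥W) ∘ₗ (LinearMap.snd ℝ (↥V × ↥V) (↥W × ↥W))
    let q4 : ((↥V × ↥V) × (↥W × ↥W)) →ₗ[ℝ] (Fin n → ℝ) :=
      W.subtype ∘ₗ (LinearMap.snd ℝ ↥W ↥W) ∘ₗ (LinearMap.snd ℝ (↥V × ↥V) (↥W × ↥W))
    let T : ((↥V × ↥V) × (↥W × ↥W)) →ₗ[ℝ]
        ((Fin n → ℝ) × (Fin n → ℝ) × (Fin n → ℝ) × (Fin n → ℝ)) :=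
      q1.prod ((J ∘ₗ q1 + q2 + q3).prod ((-q1 + q4).prod q2))
    have hq1 : ∀ x, q1 x = ↑x.1.1 := fun x => rfl
    have hq2 : ∀ x, q2 x = ↑x.1.2 := fun x => rfl
    have hq3 : ∀ x, q3 x = ↑x.2.1 := fun x => rfl
    have hq4 : ∀ x, q4 x = ↑x.2.2 := fun x => rfl
    have hTapp : ∀ x, T x = (q1 x, (J (q1 x) + q2 x + q3 x, (- q1 x + q4 x, q2 x))) :=
      fun x => rfl
    have hTinj : Function.Injective T := by
      rw [injective_iff_map_eq_zero]
      intro x hx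
      have e1 : q1 x = 0 := congrArg Prod.fst hx
      have e4 : q2 x = 0 := congrArg (fun p => p.2.2.2) hx
      have e3 : - q1 x + q4 x = 0 := congrArg (fun p => p.2.2.1) hx
      have e2 : J (q1 x) + q2 x + q3 x = 0 := congrArg (fun p => p.2.1) hx
      rw [e1, neg_zero, zero_add] at e3
      rw [e1, map_zero, zero_add, e4, zero_add] at e2
      rw [hq1] at e1
      rw [hq2] at e4
      rw [hq3] at e2
      rw [hq4] at e3
      exact Prod.ext (Prod.ext (Subtype.ext e1) (Subtype.ext e4))
        (Prod.ext (Subtype.ext e2) (Subtype.ext e3))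
    have hTrange : LinearMap.range T = D := by
      apply le_antisymm
      · rintro _ ⟨x, rfl⟩
        refine (hDmem _).2 ⟨?_, ?_, ?_, ?_⟩
        · exact (hPV _).2 x.1.1.2
        · show P (- q1 x + q4 x) = - q1 x
          rw [hq1, hq4, map_add, map_neg, (hPV _).2 x.1.1.2, (hPzero _).2 x.2.2.2, add_zero]
        · show P (J (q1 x) + q2 x + q3 x) = J (q1 x) + q2 x
          rw [hq1, hq2, hq3, map_add, map_add, hPJ, (hPV _).2 x.1.2.2,
            (hPzero _).2 x.2.1.2, add_zero]
        · exact (hPV _).2 x.1.2.2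
      · intro q hq
        obtain ⟨h1, h2, h3, h4⟩ := (hDmem q).1 hq
        have hw1 : q.2.1 - J q.1 - q.2.2.2 ∈ W := by
          apply (hPzero _).1
          rw [map_sub, map_sub, hPJ, h3, h4]
          abel
        have hw2 : q.2.2.1 + q.1 ∈ W := by
          apply (hPzero _).1
          rw [map_add, h2, h1, neg_add_cancel]
        refine ⟨((⟨q.1, (hPV _).1 h1⟩, ⟨q.2.2.2, (hPV _).1 h4⟩),
                (⟨q.2.1 - J q.1 - q.2.2.2, hw1⟩, ⟨q.2.2.1 + q.1, hw2⟩)), ?_⟩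
        refine Prod.ext rfl (Prod.ext ?_ (Prod.ext ?_ rfl))
        · show J q.1 + q.2.2.2 + (q.2.1 - J q.1 - q.2.2.2) = q.2.1
          abel
        · show - q.1 + (q.2.2.1 + q.1) = q.2.2.1
          abel
    have hfr := LinearEquiv.finrank_eq (LinearEquiv.ofInjective T hTinj)
    rw [hTrange] at hfr
    rw [← hfr, finrank_prod, finrank_prod, finrank_prod]
    omega
  · -- symmetry of R
    intro p hp q hq
    rw [hRmem] at hp hq
    rw [hp, hq, hSsym, dotProduct_comm, sub_self]
  · -- nonnegativity of R
    intro p hp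
    rw [hRmem] at hp
    rw [hp]
    exact hSpos _
  · -- dimension of R
    have hgr : R = LinearMap.range
        ((LinearMap.id : (Fin n → ℝ) →ₗ[ℝ] (Fin n → ℝ)).prod S) := by
      apply le_antisymm
      · intro p hp
        rw [hRmem] at hp
        exact ⟨p.1, Prod.ext rfl hp.symm⟩
      · rintro p ⟨y, rfl⟩
        exact (hRmem _).2 rfl
    have hinj : Function.Injective
        ((LinearMap.id : (Fin n → ℝ) →ₗ[ℝ] (Fin n → ℝ)).prod S) := by
      intro a b hab
      have := congrArg Prod.fst hab
      simpa using this
    have hfr := LinearEquiv.finrank_eq (LinearEquiv.ofInjective _ hinj)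
    rw [hgr, ← hfr]
    simp
  · -- the composition identity
    apply Set.ext
    rintro ⟨f, e⟩
    simp only [Set.mem_setOf_eq, SetLike.mem_coe]
    constructor
    · intro hfe
      obtain ⟨hPf, hPe⟩ := (hMchar f e).1 hfe
      refine ⟨f, S f, (hDmem _).2 ⟨hPf, ?_, ?_, hPS f⟩, (hRmem _).2 rfl⟩
      · show P (-f) = - f
        rw [map_neg, hPf]
      · show P e = J f + S f
        rw [hPe, hJx, sub_add_cancel]
    · rintro ⟨fR, eR, hD, hR⟩
      obtain ⟨h1, h2, h3, h4⟩ := (hDmem _).1 hD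
      have hR' : eR = S fR := (hRmem _).1 hR
      have h1' : P f = f := h1
      have h2' : P (-fR) = - f := h2
      have h3' : P e = J f + eR := h3
      have hPfR : P fR = f := by
        have hx : - P fR = - f := by rw [← map_neg]; exact h2'
        exact neg_inj.mp hx
      have heR : eR = S f := by
        rw [hR', ← hPfR, hSP]
      refine (hMchar f e).2 ⟨h1', ?_⟩
      rw [h3', heR, hJx, sub_add_cancel]
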